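/- For all real numbers x₁ ≤ 0 and x₂ ≤ 0: Φ(x₁) + Φ(x₂) ≤ 1/2 + Φ(x₁ + x₂), where Φ is the standard normal CDF. -/

import Mathlib

open MeasureTheory

/-- The standard normal CDF `Φ(x) = ∫_{-∞}^{x} e^{-t²/2}/√(2π) dt`. -/
noncomputable def stdGaussianCDF (x : ℝ) : ℝ :=
  (∫ t in Set.Iic x, Real.exp (-(t ^ 2) / 2)) / Real.sqrt (2 * Real.pi)

lemma gauss_integrable : MeasureTheory.Integrable (fun t : ℝ => Real.exp (-(t ^ 2) / 2)) := by
  have := integrable_exp_neg_mul_sq (b := (1/2 : ℝ)) (by norm_num)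
  convert this using 2 with t
  ring_nf

lemma gauss_half : (∫ t in Set.Iic (0:ℝ), Real.exp (-(t ^ 2) / 2)) = Real.sqrt (2 * Real.pi) / 2 := by
  have hint : (∫ t : ℝ, Real.exp (-(t ^ 2) / 2)) = Real.sqrt (2 * Real.pi) := by
    have := integral_gaussian (1/2 : ℝ)
    simp only [neg_mul] at this
    rw [show (2 * Real.pi) = Real.pi / (1/2) by ring, ← this]
    congr 1 with t
    ring_nf
  have hsym : (∫ t in Set.Iic (0:ℝ), Real.exp (-(t ^ 2) / 2))
      = ∫ t in Set.Ioi (0:ℝ), Real.exp (-(t ^ 2) / 2) := by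
    rw [← neg_zero, ← integral_comp_neg_Ioi]
    simp
  have hsplit : (∫ t in Set.Iic (0:ℝ), Real.exp (-(t ^ 2) / 2))
      + (∫ t in Set.Ioi (0:ℝ), Real.exp (-(t ^ 2) / 2))
      = ∫ t : ℝ, Real.exp (-(t ^ 2) / 2) := by
    rw [← MeasureTheory.setIntegral_union (Set.Iic_disjoint_Ioi le_rfl) measurableSet_Ioi
      gauss_integrable.integrableOn gauss_integrable.integrableOn,
      Set.Iic_union_Ioi, Measure.restrict_univ]
  rw [hsym] at hsplit ⊢
  linarith [hsplit, hint]

/-- Superadditivity of Gaussian probabilities on the negative half-line: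
for all `x₁ ≤ 0` and `x₂ ≤ 0`, `Φ(x₁) + Φ(x₂) ≤ 1/2 + Φ(x₁ + x₂)`. -/
theorem stmt_18 (x₁ x₂ : ℝ) (hx₁ : x₁ ≤ 0) (hx₂ : x₂ ≤ 0) :
    stdGaussianCDF x₁ + stdGaussianCDF x₂ ≤ 1 / 2 + stdGaussianCDF (x₁ + x₂) := by
  set f : ℝ → ℝ := fun t => Real.exp (-(t ^ 2) / 2) with hf
  have hsqrt : (0:ℝ) < Real.sqrt (2 * Real.pi) :=
    Real.sqrt_pos.mpr (by positivity)
  -- key inequality on interval integrals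
  have hkey : (∫ t in (x₁ + x₂)..x₂, f t) ≤ ∫ t in x₁..(0:ℝ), f t := by
    have hshift : (∫ t in (x₁ + x₂)..x₂, f t) = ∫ t in x₁..(0:ℝ), f (t + x₂) := by
      rw [intervalIntegral.integral_comp_add_right (a := x₁) (b := 0) f x₂]
      simp
    rw [hshift]
    apply intervalIntegral.integral_mono_on hx₁
    · exact (gauss_integrable.comp_add_right x₂).intervalIntegrable
    · exact gauss_integrable.intervalIntegrable
    · intro t ht
      obtain ⟨ht1, ht2⟩ := ht
      apply Real.exp_le_exp.mpr
      have : t ^ 2 ≤ (t + x₂) ^ 2 := by nlinarith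
      linarith
  have hdiff : ∀ a b : ℝ, a ≤ b →
      (∫ t in Set.Iic b, f t) - (∫ t in Set.Iic a, f t) = ∫ t in a..b, f t := by
    intro a b _
    exact (intervalIntegral.integral_Iic_sub_Iic gauss_integrable.integrableOn
      gauss_integrable.integrableOn)
  have h1 := hdiff x₁ 0 hx₁
  have h2 := hdiff (x₁ + x₂) x₂ (by linarith)
  have h0 : (∫ t in Set.Iic (0:ℝ), f t) = Real.sqrt (2 * Real.pi) / 2 := gauss_half
  unfold stdGaussianCDF
  rw [← add_div]
  have heq : (1:ℝ)/2 + (∫ t in Set.Iic (x₁ + x₂), Real.exp (-(t ^ 2) / 2)) / Real.sqrt (2 * Real.pi)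
      = (Real.sqrt (2 * Real.pi) / 2 + ∫ t in Set.Iic (x₁ + x₂), Real.exp (-(t ^ 2) / 2))
        / Real.sqrt (2 * Real.pi) := by
    field_simp
  rw [heq, div_le_div_iff_of_pos_right hsqrt]
  simp only [hf] at h0 h1 h2 hkey
  linarith
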